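/- Let p : [0,2π] → ℝ be twice differentiable and t : [0,2π] → ℝ be differentiable with t' = (p')² − p², and let γ(θ) = (p cos θ − p' sin θ, p sin θ + p' cos θ, t − p'p). Then for every θ ∈ [0,2π]: (i) γ(θ) lies on the horizontal line ℓ(p(θ), θ, t(θ)), namely γ(θ) = ℓ(s) at s = p'(θ); and (ii) the tangent vector satisfies γ'(θ) = (p(θ) + p''(θ)) · (−sin θ, cos θ, −p(θ)), i.e. γ'(θ) is a scalar multiple of the direction vector (−sin θ, cos θ, −p(θ)) of the line ℓ(p(θ), θ, t(θ)). -/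
import Mathlib


/-- The envelope curve γ lies on the horizontal line ℓ(p(θ),θ,t(θ)) at the parameter
value s = p'(θ), and its tangent vector is γ'(θ) = (p + p'')·(−sin θ, cos θ, −p),
a scalar multiple of the direction vector of the line. -/
theorem envelope_tangent_to_lines (p t : ℝ → ℝ)
    (hp : Differentiable ℝ p) (hp' : Differentiable ℝ (deriv p))
    (ht : Differentiable ℝ t)
    (hcond : ∀ θ ∈ Set.Icc (0 : ℝ) (2 * Real.pi),
      deriv t θ = (deriv p θ) ^ 2 - (p θ) ^ 2)
    (x y z : ℝ → ℝ)
    (hx : x = fun θ => p θ * Real.cos θ - deriv p θ * Real.sin θ)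
    (hy : y = fun θ => p θ * Real.sin θ + deriv p θ * Real.cos θ)
    (hz : z = fun θ => t θ - deriv p θ * p θ)
    (ℓ : ℝ → ℝ → ℝ × ℝ × ℝ)
    (hℓ : ℓ = fun θ s =>
      (p θ * Real.cos θ - s * Real.sin θ,
       p θ * Real.sin θ + s * Real.cos θ,
       t θ - s * p θ)) :
    ∀ θ ∈ Set.Icc (0 : ℝ) (2 * Real.pi),
      (x θ, y θ, z θ) = ℓ θ (deriv p θ) ∧
      (deriv x θ, deriv y θ, deriv z θ)
        = ((p θ + deriv (deriv p) θ) * (-Real.sin θ),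
           (p θ + deriv (deriv p) θ) * Real.cos θ,
           (p θ + deriv (deriv p) θ) * (-p θ)) := by
  intro θ hθ
  have hpθ := (hp θ).hasDerivAt
  have hp'θ := (hp' θ).hasDerivAt
  have htθ := (ht θ).hasDerivAt
  have hcos := Real.hasDerivAt_cos θ
  have hsin := Real.hasDerivAt_sin θ
  have hxd : HasDerivAt x
      (deriv p θ * Real.cos θ + p θ * (-Real.sin θ)
        - (deriv (deriv p) θ * Real.sin θ + deriv p θ * Real.cos θ)) θ := by
    rw [hx]; exact (hpθ.mul hcos).sub (hp'θ.mul hsin)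
  have hyd : HasDerivAt y
      (deriv p θ * Real.sin θ + p θ * Real.cos θ
        + (deriv (deriv p) θ * Real.cos θ + deriv p θ * (-Real.sin θ))) θ := by
    rw [hy]; exact (hpθ.mul hsin).add (hp'θ.mul hcos)
  have hzd : HasDerivAt z
      (deriv t θ - (deriv (deriv p) θ * p θ + deriv p θ * deriv p θ)) θ := by
    rw [hz]; exact htθ.sub (hp'θ.mul hpθ)
  constructor
  · rw [hx, hy, hz, hℓ]
  · rw [hxd.deriv, hyd.deriv, hzd.deriv, hcond θ hθ]
    refine Prod.ext (by ring) (Prod.ext (by ring) (by ring))
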